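/- Let a, b, ν be real numbers and let y : ℝ → ℝ be twice differentiable on (−1,1) and satisfy Jacobi's differential equation (1−x²)·y''(x) + (b − a − (a+b+2)·x)·y'(x) + ν·(ν+a+b+1)·y(x) = 0 for all x ∈ (−1,1). Define ỹ : (0,π) → ℝ by ỹ(t) = y(cos t)·(sin(t/2))^{a+1/2}·(cos(t/2))^{b+1/2}. Then ỹ is twice differentiable on (0,π) and satisfies ỹ''(t) + q_ν^{(a,b)}(t)·ỹ(t) = 0 for all t ∈ (0,π). -/

import Mathlib

open Real Set
open Topology

/-- The coefficient in the modified Jacobi differential equation. -/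
noncomputable def jacobiQ (a b ν t : ℝ) : ℝ :=
  ν * (a + b + ν + 1)
    + (1 / 2) * (1 / Real.sin t) ^ 2 * (-(b - a) * Real.cos t + a + b + 1)
    - (1 / 4) * ((a + b + 1) * (Real.cos t / Real.sin t)
        - (b - a) * (1 / Real.sin t)) ^ 2


noncomputable def jW (a b s : ℝ) : ℝ :=
  Real.sin (s / 2) ^ (a + 1/2) * Real.cos (s / 2) ^ (b + 1/2)

noncomputable def jg (a b s : ℝ) : ℝ :=
  (a + 1/2)/2 * (Real.cos (s/2) / Real.sin (s/2))
    - (b + 1/2)/2 * (Real.sin (s/2) / Real.cos (s/2))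

noncomputable def jG (a b : ℝ) (y : ℝ → ℝ) (s : ℝ) : ℝ :=
  deriv y (Real.cos s) * (-Real.sin s) * jW a b s
    + y (Real.cos s) * (jW a b s * jg a b s)

lemma hasDerivAt_jW (a b t : ℝ) (hs : 0 < Real.sin (t/2)) (hc : 0 < Real.cos (t/2)) :
    HasDerivAt (jW a b) (jW a b t * jg a b t) t := by
  have hhalf : HasDerivAt (fun s : ℝ => s / 2) (1/2) t := (hasDerivAt_id t).div_const 2
  have hsin : HasDerivAt (fun s : ℝ => Real.sin (s/2)) (Real.cos (t/2) * (1/2)) t :=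
    hhalf.sin
  have hcos : HasDerivAt (fun s : ℝ => Real.cos (s/2)) (-Real.sin (t/2) * (1/2)) t :=
    hhalf.cos
  have hA : HasDerivAt (fun s : ℝ => Real.sin (s/2) ^ (a + 1/2))
      (Real.cos (t/2) * (1/2) * (a + 1/2) * Real.sin (t/2) ^ (a + 1/2 - 1)) t :=
    hsin.rpow_const (Or.inl hs.ne')
  have hB : HasDerivAt (fun s : ℝ => Real.cos (s/2) ^ (b + 1/2))
      (-Real.sin (t/2) * (1/2) * (b + 1/2) * Real.cos (t/2) ^ (b + 1/2 - 1)) t :=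
    hcos.rpow_const (Or.inl hc.ne')
  have h := hA.mul hB
  refine HasDerivAt.congr_deriv h ?_
  rw [Real.rpow_sub_one hs.ne', Real.rpow_sub_one hc.ne']
  unfold jW jg
  field_simp
  ring

lemma hasDerivAt_jg (a b t : ℝ) (hs : 0 < Real.sin (t/2)) (hc : 0 < Real.cos (t/2)) :
    HasDerivAt (jg a b)
      (-((a + 1/2)/(4 * Real.sin (t/2) ^ 2)) - (b + 1/2)/(4 * Real.cos (t/2) ^ 2)) t := by
  have hhalf : HasDerivAt (fun s : ℝ => s / 2) (1/2) t := (hasDerivAt_id t).div_const 2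
  have hsin : HasDerivAt (fun s : ℝ => Real.sin (s/2)) (Real.cos (t/2) * (1/2)) t :=
    hhalf.sin
  have hcos : HasDerivAt (fun s : ℝ => Real.cos (s/2)) (-Real.sin (t/2) * (1/2)) t :=
    hhalf.cos
  have h1 : HasDerivAt (fun s : ℝ => Real.cos (s/2) / Real.sin (s/2))
      ((-Real.sin (t/2) * (1/2) * Real.sin (t/2) - Real.cos (t/2) * (Real.cos (t/2) * (1/2)))
        / Real.sin (t/2) ^ 2) t := hcos.div hsin hs.ne'
  have h2 : HasDerivAt (fun s : ℝ => Real.sin (s/2) / Real.cos (s/2))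
      ((Real.cos (t/2) * (1/2) * Real.cos (t/2) - Real.sin (t/2) * (-Real.sin (t/2) * (1/2)))
        / Real.cos (t/2) ^ 2) t := hsin.div hcos hc.ne'
  have hpy := Real.sin_sq_add_cos_sq (t/2)
  have e1 : -Real.sin (t/2) * (1/2) * Real.sin (t/2) - Real.cos (t/2) * (Real.cos (t/2) * (1/2))
      = -(1/2) := by linear_combination (-(1/2 : ℝ)) * hpy
  have e2 : Real.cos (t/2) * (1/2) * Real.cos (t/2) - Real.sin (t/2) * (-Real.sin (t/2) * (1/2))
      = 1/2 := by linear_combination ((1/2 : ℝ)) * hpy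
  rw [e1] at h1; rw [e2] at h2
  have h := (h1.const_mul ((a + 1/2)/2)).sub (h2.const_mul ((b + 1/2)/2))
  refine HasDerivAt.congr_deriv h ?_
  field_simp
  ring

theorem modified_jacobi_equation (a b ν : ℝ) (y : ℝ → ℝ)
    (hy : ∀ x ∈ Ioo (-1 : ℝ) 1, DifferentiableAt ℝ y x ∧ DifferentiableAt ℝ (deriv y) x)
    (heq : ∀ x ∈ Ioo (-1 : ℝ) 1,
      (1 - x ^ 2) * deriv (deriv y) x + (b - a - (a + b + 2) * x) * deriv y x
        + ν * (ν + a + b + 1) * y x = 0) :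
    (∀ t ∈ Ioo 0 Real.pi,
      DifferentiableAt ℝ
        (fun s => y (Real.cos s) * Real.sin (s / 2) ^ (a + 1 / 2)
          * Real.cos (s / 2) ^ (b + 1 / 2)) t ∧
      DifferentiableAt ℝ
        (deriv (fun s => y (Real.cos s) * Real.sin (s / 2) ^ (a + 1 / 2)
          * Real.cos (s / 2) ^ (b + 1 / 2))) t) ∧
    (∀ t ∈ Ioo 0 Real.pi,
      deriv (deriv (fun s => y (Real.cos s) * Real.sin (s / 2) ^ (a + 1 / 2)
          * Real.cos (s / 2) ^ (b + 1 / 2))) t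
        + jacobiQ a b ν t * (y (Real.cos t) * Real.sin (t / 2) ^ (a + 1 / 2)
            * Real.cos (t / 2) ^ (b + 1 / 2)) = 0) := by
  have hmem : ∀ t ∈ Ioo (0:ℝ) π, Real.cos t ∈ Ioo (-1:ℝ) 1 := by
    intro t ht
    have h1 := Real.strictAntiOn_cos ⟨ht.1.le, ht.2.le⟩ ⟨Real.pi_nonneg, le_refl π⟩ ht.2
    have h2 := Real.strictAntiOn_cos ⟨le_refl 0, Real.pi_nonneg⟩ ⟨ht.1.le, ht.2.le⟩ ht.1
    simp [Real.cos_pi, Real.cos_zero] at h1 h2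
    exact ⟨h1, h2⟩
  have hsc : ∀ t ∈ Ioo (0:ℝ) π, 0 < Real.sin (t/2) ∧ 0 < Real.cos (t/2) := by
    intro t ht
    constructor
    · exact Real.sin_pos_of_pos_of_lt_pi (by linarith [ht.1]) (by linarith [ht.2, Real.pi_pos])
    · exact Real.cos_pos_of_mem_Ioo ⟨by linarith [ht.1, Real.pi_pos], by linarith [ht.2]⟩
  have hFeq : (fun s => y (Real.cos s) * Real.sin (s / 2) ^ (a + 1 / 2)
      * Real.cos (s / 2) ^ (b + 1 / 2)) = fun s => y (Real.cos s) * jW a b s := by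
    funext s; rw [jW]; ring
  have hu : ∀ t ∈ Ioo (0:ℝ) π,
      HasDerivAt (fun s => y (Real.cos s)) (deriv y (Real.cos t) * (-Real.sin t)) t := by
    intro t ht
    exact ((hy _ (hmem t ht)).1.hasDerivAt).comp t (Real.hasDerivAt_cos t)
  have hF' : ∀ t ∈ Ioo (0:ℝ) π,
      HasDerivAt (fun s => y (Real.cos s) * jW a b s) (jG a b y t) t := by
    intro t ht
    exact (hu t ht).mul (hasDerivAt_jW a b t (hsc t ht).1 (hsc t ht).2)
  have hG2 : ∀ t ∈ Ioo (0:ℝ) π,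
      HasDerivAt (deriv (fun s => y (Real.cos s) * jW a b s))
        ((deriv (deriv y) (Real.cos t) * (-Real.sin t) * (-Real.sin t)
            + deriv y (Real.cos t) * (-Real.cos t)) * jW a b t
          + deriv y (Real.cos t) * (-Real.sin t) * (jW a b t * jg a b t)
          + (deriv y (Real.cos t) * (-Real.sin t) * (jW a b t * jg a b t)
            + y (Real.cos t) * (jW a b t * jg a b t * jg a b t
              + jW a b t * (-((a + 1/2)/(4 * Real.sin (t/2) ^ 2))
                - (b + 1/2)/(4 * Real.cos (t/2) ^ 2))))) t := by
    intro t ht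
    obtain ⟨hs, hc⟩ := hsc t ht
    have hdy : HasDerivAt (fun s => deriv y (Real.cos s))
        (deriv (deriv y) (Real.cos t) * (-Real.sin t)) t :=
      ((hy _ (hmem t ht)).2.hasDerivAt).comp t (Real.hasDerivAt_cos t)
    have hns : HasDerivAt (fun s : ℝ => -Real.sin s) (-Real.cos t) t :=
      (Real.hasDerivAt_sin t).neg
    have hW := hasDerivAt_jW a b t hs hc
    have hg := hasDerivAt_jg a b t hs hc
    have hG : HasDerivAt (jG a b y) _ t := ((hdy.mul hns).mul hW).add ((hu t ht).mul (hW.mul hg))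
    have hEq : deriv (fun s => y (Real.cos s) * jW a b s) =ᶠ[𝓝 t] jG a b y :=
      Filter.eventuallyEq_of_mem (Ioo_mem_nhds ht.1 ht.2) (fun x hx => (hF' x hx).deriv)
    exact (hG.congr_of_eventuallyEq hEq)
  constructor
  · intro t ht
    rw [hFeq]
    exact ⟨(hF' t ht).differentiableAt, (hG2 t ht).differentiableAt⟩
  · intro t ht
    obtain ⟨hs, hc⟩ := hsc t ht
    rw [hFeq, (hG2 t ht).deriv]
    have hpy : Real.sin (t/2) ^ 2 + Real.cos (t/2) ^ 2 = 1 := Real.sin_sq_add_cos_sq _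
    have hsin2 : Real.sin t = 2 * Real.sin (t/2) * Real.cos (t/2) := by
      have h := Real.sin_two_mul (t/2)
      rw [show 2 * (t/2) = t by ring] at h
      exact h
    have hcos2 : Real.cos t = 1 - 2 * Real.sin (t/2) ^ 2 := by
      have h := Real.cos_two_mul (t/2)
      rw [show 2 * (t/2) = t by ring] at h
      rw [h]
      linear_combination 2 * hpy
    have hODE := heq _ (hmem t ht)
    rw [hcos2] at hODE
    rw [jacobiQ, jW, jg, hsin2, hcos2]
    have hs0 : Real.sin (t/2) ≠ 0 := hs.ne'
    have hc0 : Real.cos (t/2) ≠ 0 := hc.ne'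
    set S := Real.sin (t/2)
    set C := Real.cos (t/2)
    set A := S ^ (a + 1/2)
    set B := C ^ (b + 1/2)
    set Y := y (1 - 2 * S ^ 2)
    set Y1 := deriv y (1 - 2 * S ^ 2)
    set Y2 := deriv (deriv y) (1 - 2 * S ^ 2)
    field_simp
    rw [show C ^ 2 = 1 - S ^ 2 by linear_combination hpy]
    linear_combination (64 * A * B * S ^ 2 * (1 - S ^ 2)) * hODE
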